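/- Let a rooted tree on {1,…,d} be given, let k be a non-root node, and let p : ∏_{i=1}^d [n_i] → ℝ be a strictly positive probability distribution that factorizes over the tree, i.e. p(x) = φ(x_{r₀})·∏_{j ≠ r₀} ψ_j(x_j, x_{P(j)}) with all factors positive. Then for any subsets S₁ ⊆ L(k) ∪ {k} and S₂ ⊆ R(k) with P(k) ∈ S₂, the column space of the unfolding matrix (M_{S₁∪S₂} p)(x_{S₁}; x_{S₂}) equals the column space of the unfolding matrix (M_{S₁∪{P(k)}} p)(x_{S₁}; x_{P(k)}). -/

import Mathlib

open scoped Classical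

noncomputable section

/-- A rooted tree on the vertex set `Fin d`: a root and a parent map fixing the root,
such that every vertex reaches the root under iteration of the parent map. -/
structure ParentTree (d : ℕ) where
  root : Fin d
  parent : Fin d → Fin d
  parent_root : parent root = root
  reaches_root : ∀ v : Fin d, ∃ m : ℕ, parent^[m] v = root

namespace ParentTree

variable {d : ℕ}

/-- The children of a node `k`. -/
def children (T : ParentTree d) (k : Fin d) : Set (Fin d) :=
  {w | w ≠ T.root ∧ w ≠ k ∧ T.parent w = k}

/-- The descendants of a node `w` (the "left" set `L(w)`). -/
def desc (T : ParentTree d) (w : Fin d) : Set (Fin d) :=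
  {v | v ≠ w ∧ ∃ m : ℕ, 1 ≤ m ∧ T.parent^[m] v = w}

end ParentTree

/-- The unfolding matrix of the marginalization `M_{S₁∪S₂} p`, with rows indexed by
the variables in `S₁` and columns indexed by the variables in `S₂` (for disjoint
`S₁, S₂`): its `(a, b)` entry is the sum of `p x` over all full configurations `x`
agreeing with `a` on `S₁` and with `b` on `S₂`. -/
def margUnfold {d : ℕ} {n : Fin d → ℕ} (p : (∀ i, Fin (n i)) → ℝ)
    (S₁ S₂ : Set (Fin d)) :
    Matrix ((i : S₁) → Fin (n i.1)) ((j : S₂) → Fin (n j.1)) ℝ :=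
  Matrix.of fun a b =>
    ∑ x : ∀ i, Fin (n i),
      if (∀ i : S₁, x i.1 = a i) ∧ (∀ j : S₂, x j.1 = b j) then p x else 0

namespace ParentTree

variable {d : ℕ} (T : ParentTree d) {k j : Fin d}

lemma iterate_root (m : ℕ) : T.parent^[m] T.root = T.root :=
  Function.iterate_fixed T.parent_root m

lemma eq_root_of_cycle {c : ℕ} (hc : 1 ≤ c) (hcyc : T.parent^[c] k = k) :
    k = T.root := by
  obtain ⟨t, ht⟩ := T.reaches_root k
  have hmul : ∀ m : ℕ, T.parent^[c * m] k = k := by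
    intro m; induction m with
    | zero => simp
    | succ m ih => rw [Nat.mul_succ, Function.iterate_add_apply, hcyc, ih]
  have hle : t ≤ c * t := Nat.le_mul_of_pos_left t hc
  calc k = T.parent^[c * t] k := (hmul t).symm
    _ = T.parent^[c * t - t] (T.parent^[t] k) := by
        rw [← Function.iterate_add_apply, Nat.sub_add_cancel hle]
    _ = T.root := by rw [ht, T.iterate_root]

lemma root_notin (hk : k ≠ T.root) : T.root ∉ T.desc k ∪ {k} := by
  rintro (⟨hne, m, hm1, hm⟩ | h)
  · rw [T.iterate_root] at hm; exact hk hm.symm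
  · exact hk (Set.mem_singleton_iff.mp h).symm

lemma parent_notin (hk : k ≠ T.root) : T.parent k ∉ T.desc k ∪ {k} := by
  rintro (⟨hne, m, hm1, hm⟩ | h)
  · refine hk (T.eq_root_of_cycle (c := m + 1) (by omega) ?_)
    rw [Function.iterate_succ_apply]; exact hm
  · refine hk (T.eq_root_of_cycle (c := 1) le_rfl ?_)
    simpa using (Set.mem_singleton_iff.mp h)

lemma closed_parent (h : T.parent j ∈ T.desc k ∪ {k}) : j ∈ T.desc k ∪ {k} := by
  by_cases hjk : j = k
  · right; simp [hjk]
  · left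
    rcases h with ⟨hne, m, hm1, hm⟩ | h
    · exact ⟨hjk, m + 1, by omega, by rw [Function.iterate_succ_apply]; exact hm⟩
    · exact ⟨hjk, 1, le_rfl, by simpa using (Set.mem_singleton_iff.mp h)⟩

lemma parent_mem_of_desc (h : j ∈ T.desc k) : T.parent j ∈ T.desc k ∪ {k} := by
  obtain ⟨hne, m, hm1, hm⟩ := h
  obtain ⟨m', rfl⟩ : ∃ m', m = m' + 1 := ⟨m - 1, by omega⟩
  have hm' : T.parent^[m'] (T.parent j) = k := by
    rw [← Function.iterate_succ_apply]; exact hm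
  by_cases hpj : T.parent j = k
  · right; simp [hpj]
  · left
    rcases Nat.eq_zero_or_pos m' with h0 | hpos
    · subst h0; simp at hm'; exact absurd hm' hpj
    · exact ⟨hpj, m', hpos, hm'⟩

lemma mem_parent_cases (h : j ∈ T.desc k ∪ {k}) :
    j = k ∨ T.parent j ∈ T.desc k ∪ {k} := by
  rcases h with h | h
  · exact Or.inr (T.parent_mem_of_desc h)
  · exact Or.inl (Set.mem_singleton_iff.mp h)

end ParentTree

/-- Splitting a sum over full configurations into a product of two sums, when the
summand factors into a part depending on coordinates in `Kp` (plus one distinguished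
outside coordinate `i₀`, pinned to the value `w i₀`) and a part depending on the
coordinates outside `Kp`. -/
lemma split_sum {ι : Type*} [Fintype ι] [DecidableEq ι] (π : ι → Type*) [∀ i, Fintype (π i)]
    (Kp : ι → Prop) (i₀ : ι) (hi₀ : ¬ Kp i₀)
    (A B : (∀ i, π i) → ℝ)
    (hA : ∀ x x' : ∀ i, π i, (∀ i, ¬ Kp i → x i = x' i) → A x = A x')
    (hB : ∀ x x' : ∀ i, π i, (∀ i, Kp i → x i = x' i) → x i₀ = x' i₀ → B x = B x')
    (C₁ C₂ : (∀ i, π i) → Prop)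
    (hC₁ : ∀ x x' : ∀ i, π i, (∀ i, Kp i → x i = x' i) → (C₁ x ↔ C₁ x'))
    (hC₂ : ∀ x x' : ∀ i, π i, (∀ i, ¬ Kp i → x i = x' i) → (C₂ x ↔ C₂ x'))
    (w : ∀ i, π i) (hw : ∀ x, C₂ x → x i₀ = w i₀) :
    ∑ x : ∀ i, π i, (if C₁ x ∧ C₂ x then A x * B x else 0)
      = (∑ u : ∀ i : {i // Kp i}, π i.1,
          (if C₁ (fun i => if h : Kp i then u ⟨i, h⟩ else w i) then
            B (fun i => if h : Kp i then u ⟨i, h⟩ else w i) else 0))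
        * (∑ v : ∀ i : {i // ¬ Kp i}, π i.1,
          (if C₂ (fun i => if h : Kp i then w i else v ⟨i, h⟩) then
            A (fun i => if h : Kp i then w i else v ⟨i, h⟩) else 0)) := by
  classical
  set e := Equiv.piEquivPiSubtypeProd Kp π with he
  have hsum : ∑ x : ∀ i, π i, (if C₁ x ∧ C₂ x then A x * B x else 0)
      = ∑ uv : ((i : {i // Kp i}) → π i.1) × ((i : {i // ¬ Kp i}) → π i.1),
          (if C₁ (e.symm uv) ∧ C₂ (e.symm uv) then A (e.symm uv) * B (e.symm uv) else 0) :=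
    (Equiv.sum_comp e.symm _).symm
  rw [hsum, Fintype.sum_prod_type, Finset.sum_mul_sum]
  apply Finset.sum_congr rfl; intro u _
  apply Finset.sum_congr rfl; intro v _
  have hx : ∀ i, e.symm (u, v) i = if h : Kp i then u ⟨i, h⟩ else v ⟨i, h⟩ := by
    intro i; rw [he]; exact Equiv.piEquivPiSubtypeProd_symm_apply Kp π (u, v) i
  set x := e.symm (u, v) with hxdef
  set xu : ∀ i, π i := fun i => if h : Kp i then u ⟨i, h⟩ else w i with hxu
  set xv : ∀ i, π i := fun i => if h : Kp i then w i else v ⟨i, h⟩ with hxv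
  have hagreeK : ∀ i, Kp i → x i = xu i := by
    intro i hi; rw [hx i, hxu]; simp [hi]
  have hagreeO : ∀ i, ¬ Kp i → x i = xv i := by
    intro i hi; rw [hx i, hxv]; simp [hi]
  have hc1 : C₁ x ↔ C₁ xu := hC₁ x xu hagreeK
  have hc2 : C₂ x ↔ C₂ xv := hC₂ x xv hagreeO
  have hAx : A x = A xv := hA x xv hagreeO
  by_cases h1 : C₁ x
  · by_cases h2 : C₂ x
    · have hBx : B x = B xu := by
        refine hB x xu hagreeK ?_
        rw [hw x h2]; simp [hxu, hi₀]
      rw [if_pos ⟨h1, h2⟩, if_pos (hc1.mp h1), if_pos (hc2.mp h2), hAx, hBx]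
      ring
    · rw [if_neg (fun hc => h2 hc.2), if_neg (fun hc => h2 (hc2.mpr hc))]
      ring
  · rw [if_neg (fun hc => h1 hc.1), if_neg (fun hc => h1 (hc1.mpr hc))]
    simp

/-- If the columns of `M` are nonzero multiples of columns of `N`, via a surjection
on column indices, then the two matrices have the same column space. -/
lemma range_eq_of_cols_prop {α β γ : Type*} [Fintype β] [Fintype γ]
    (M : Matrix α β ℝ) (N : Matrix α γ ℝ) (σ : β → γ) (hσ : Function.Surjective σ)
    (c : β → ℝ) (hc : ∀ b, c b ≠ 0)
    (h : ∀ b, M.transpose b = c b • N.transpose (σ b)) :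
    LinearMap.range M.mulVecLin = LinearMap.range N.mulVecLin := by
  rw [Matrix.range_mulVecLin, Matrix.range_mulVecLin]
  apply le_antisymm
  · rw [Submodule.span_le]
    rintro _ ⟨b, rfl⟩
    change M.transpose b ∈ _
    rw [h b]
    exact Submodule.smul_mem _ _ (Submodule.subset_span ⟨σ b, rfl⟩)
  · rw [Submodule.span_le]
    rintro _ ⟨g, rfl⟩
    obtain ⟨b, rfl⟩ := hσ g
    have hNg : N.transpose (σ b) = (c b)⁻¹ • M.transpose b := by
      rw [h b, smul_smul, inv_mul_cancel₀ (hc b), one_smul]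
    change N.transpose (σ b) ∈ _
    rw [hNg]
    exact Submodule.smul_mem _ _ (Submodule.subset_span ⟨b, rfl⟩)

/-- for a strictly positive probability distribution factorizing over a
rooted tree, a non-root node `k`, and subsets `S₁ ⊆ L(k) ∪ {k}`, `S₂ ⊆ R(k)` with
`P(k) ∈ S₂`, the column space of `(M_{S₁∪S₂} p)(x_{S₁}; x_{S₂})` equals the column
space of `(M_{S₁∪{P(k)}} p)(x_{S₁}; x_{P(k)})`. -/
theorem markov_unfolding_column_space {d : ℕ} (T : ParentTree d) (n : Fin d → ℕ)
    (p : (∀ i, Fin (n i)) → ℝ)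
    (φ : Fin (n T.root) → ℝ)
    (ψ : ∀ j : Fin d, Fin (n j) → Fin (n (T.parent j)) → ℝ)
    (hφ : ∀ y, 0 < φ y)
    (hψ : ∀ j : Fin d, j ≠ T.root → ∀ y z, 0 < ψ j y z)
    (hp : ∀ x, p x = φ (x T.root) *
      ∏ j ∈ Finset.univ.filter (fun j => j ≠ T.root), ψ j (x j) (x (T.parent j)))
    (hsum : ∑ x : ∀ i, Fin (n i), p x = 1)
    (k : Fin d) (hk : k ≠ T.root)
    (S₁ S₂ : Set (Fin d))
    (hS₁ : S₁ ⊆ T.desc k ∪ {k}) (hS₂ : S₂ ⊆ (T.desc k ∪ {k})ᶜ)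
    (hPk : T.parent k ∈ S₂) :
    LinearMap.range (margUnfold p S₁ S₂).mulVecLin =
      LinearMap.range (margUnfold p S₁ ({T.parent k} : Set (Fin d))).mulVecLin := by
  classical
  -- positivity of p
  have hppos : ∀ x, 0 < p x := by
    intro x
    rw [hp x]
    refine mul_pos (hφ _) (Finset.prod_pos fun j hj => ?_)
    exact hψ j (by simpa using (Finset.mem_filter.mp hj).2) _ _
  -- nonemptiness of the configuration space
  have hconf : Nonempty (∀ i, Fin (n i)) := by
    by_contra h
    rw [not_nonempty_iff] at h
    rw [Finset.univ_eq_empty, Finset.sum_empty] at hsum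
    exact zero_ne_one hsum
  obtain ⟨x₀⟩ := hconf
  have hne : ∀ i, Nonempty (Fin (n i)) := fun i => ⟨x₀ i⟩
  -- the "inside" predicate
  obtain ⟨Kp, hKp⟩ : ∃ Kp : Fin d → Prop, Kp = fun i => i ∈ T.desc k ∪ {k} := ⟨_, rfl⟩
  have hKiff : ∀ i, Kp i ↔ i ∈ T.desc k ∪ {k} := fun i => by rw [hKp]
  have hKroot : ¬ Kp T.root := fun h => T.root_notin hk ((hKiff _).mp h)
  have hKPk : ¬ Kp (T.parent k) := fun h => T.parent_notin hk ((hKiff _).mp h)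
  have hKclosed : ∀ j, ¬ Kp j → ¬ Kp (T.parent j) := fun j h hc =>
    h ((hKiff _).mpr (T.closed_parent ((hKiff _).mp hc)))
  have hKcases : ∀ j, Kp j → j = k ∨ Kp (T.parent j) := fun j h => by
    rcases T.mem_parent_cases ((hKiff _).mp h) with h' | h'
    · exact Or.inl h'
    · exact Or.inr ((hKiff _).mpr h')
  -- the factorization p = A * B
  set A : (∀ i, Fin (n i)) → ℝ := fun x =>
    φ (x T.root) * ∏ j ∈ Finset.univ.filter (fun j => ¬ Kp j ∧ j ≠ T.root),
      ψ j (x j) (x (T.parent j)) with hA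
  set B : (∀ i, Fin (n i)) → ℝ := fun x =>
    ∏ j ∈ Finset.univ.filter (fun j => Kp j), ψ j (x j) (x (T.parent j)) with hB
  have hpAB : ∀ x, p x = A x * B x := by
    intro x
    rw [hp x, hA, hB]
    have hsplit := Finset.prod_filter_mul_prod_filter_not
      (Finset.univ.filter (fun j : Fin d => j ≠ T.root)) Kp
      (fun j => ψ j (x j) (x (T.parent j)))
    rw [← hsplit]
    have h1 : (Finset.univ.filter (fun j : Fin d => j ≠ T.root)).filter Kp
        = Finset.univ.filter (fun j => Kp j) := by
      ext j
      simp only [Finset.mem_filter, Finset.mem_univ, true_and]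
      exact ⟨fun h => h.2, fun h => ⟨fun hr => hKroot (hr ▸ h), h⟩⟩
    have h2 : (Finset.univ.filter (fun j : Fin d => j ≠ T.root)).filter (fun j => ¬ Kp j)
        = Finset.univ.filter (fun j => ¬ Kp j ∧ j ≠ T.root) := by
      ext j
      simp only [Finset.mem_filter, Finset.mem_univ, true_and]
      tauto
    rw [h1, h2]
    ring
  -- congruence properties of A and B
  have hAcong : ∀ x x' : ∀ i, Fin (n i), (∀ i, ¬ Kp i → x i = x' i) → A x = A x' := by
    intro x x' hag
    rw [hA]
    simp only
    rw [hag T.root hKroot]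
    congr 1
    refine Finset.prod_congr rfl fun j hj => ?_
    obtain ⟨-, hj1, -⟩ := Finset.mem_filter.mp hj
    rw [hag j hj1, hag (T.parent j) (hKclosed j hj1)]
  have hBcong : ∀ x x' : ∀ i, Fin (n i), (∀ i, Kp i → x i = x' i) →
      x (T.parent k) = x' (T.parent k) → B x = B x' := by
    intro x x' hag hpk
    rw [hB]
    refine Finset.prod_congr rfl fun j hj => ?_
    have hj1 : Kp j := (Finset.mem_filter.mp hj).2
    rw [hag j hj1]
    rcases hKcases j hj1 with rfl | hpar
    · rw [hpk]
    · rw [hag (T.parent j) hpar]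
  -- the column projection σ
  set σ : ((j : S₂) → Fin (n j.1)) →
      ((j : ({T.parent k} : Set (Fin d))) → Fin (n j.1)) :=
    fun b j => b ⟨j.1, (Set.mem_singleton_iff.mp j.2).symm ▸ hPk⟩ with hσdef
  have hσ : Function.Surjective σ := by
    intro z
    refine ⟨fun j => if h : j.1 = T.parent k then z ⟨j.1, h⟩ else (hne j.1).some, ?_⟩
    funext j
    have hj : j.1 = T.parent k := Set.mem_singleton_iff.mp j.2
    rw [hσdef]
    simp only
    rw [dif_pos hj]
  -- reference configurations
  have hwb : ∀ b : (j : S₂) → Fin (n j.1), ∃ w : ∀ i, Fin (n i),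
      (∀ j : S₂, w j.1 = b j) ∧ w (T.parent k) = b ⟨T.parent k, hPk⟩ := by
    intro b
    refine ⟨fun i => if h : i ∈ S₂ then b ⟨i, h⟩ else x₀ i, fun j => ?_, ?_⟩
    · exact dif_pos j.2
    · exact dif_pos hPk
  -- the master splitting identity
  have master : ∀ (C₁ C₂ : (∀ i, Fin (n i)) → Prop)
      (_ : ∀ x x' : ∀ i, Fin (n i), (∀ i, Kp i → x i = x' i) → (C₁ x ↔ C₁ x'))
      (_ : ∀ x x' : ∀ i, Fin (n i), (∀ i, ¬ Kp i → x i = x' i) → (C₂ x ↔ C₂ x'))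
      (w : ∀ i, Fin (n i)) (_ : ∀ x, C₂ x → x (T.parent k) = w (T.parent k)),
      ∑ x : ∀ i, Fin (n i), (if C₁ x ∧ C₂ x then p x else 0)
        = (∑ u : ∀ i : {i // Kp i}, Fin (n i.1),
            (if C₁ (fun i => if h : Kp i then u ⟨i, h⟩ else w i) then
              B (fun i => if h : Kp i then u ⟨i, h⟩ else w i) else 0))
          * (∑ v : ∀ i : {i // ¬ Kp i}, Fin (n i.1),
            (if C₂ (fun i => if h : Kp i then w i else v ⟨i, h⟩) then
              A (fun i => if h : Kp i then w i else v ⟨i, h⟩) else 0)) := by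
    intro C₁ C₂ hC₁ hC₂ w hw
    rw [show (∑ x : ∀ i, Fin (n i), (if C₁ x ∧ C₂ x then p x else 0))
        = ∑ x : ∀ i, Fin (n i), (if C₁ x ∧ C₂ x then A x * B x else 0) from
      Finset.sum_congr rfl fun x _ => by rw [hpAB x]]
    exact split_sum (fun i => Fin (n i)) Kp (T.parent k) hKPk A B hAcong hBcong
      C₁ C₂ hC₁ hC₂ w hw
  -- congruence of the indicator conditions
  have hrowC : ∀ (a : (i : S₁) → Fin (n i.1)) (x x' : ∀ i, Fin (n i)),
      (∀ i, Kp i → x i = x' i) →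
      ((∀ i : S₁, x i.1 = a i) ↔ (∀ i : S₁, x' i.1 = a i)) := by
    intro a x x' hag
    constructor <;> intro h i
    · rw [← hag i.1 ((hKiff _).mpr (hS₁ i.2))]; exact h i
    · rw [hag i.1 ((hKiff _).mpr (hS₁ i.2))]; exact h i
  have hcolC : ∀ (b : (j : S₂) → Fin (n j.1)) (x x' : ∀ i, Fin (n i)),
      (∀ i, ¬ Kp i → x i = x' i) →
      ((∀ j : S₂, x j.1 = b j) ↔ (∀ j : S₂, x' j.1 = b j)) := by
    intro b x x' hag
    have hnK : ∀ j : S₂, ¬ Kp j.1 := fun j h => hS₂ j.2 ((hKiff _).mp h)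
    constructor <;> intro h j
    · rw [← hag j.1 (hnK j)]; exact h j
    · rw [hag j.1 (hnK j)]; exact h j
  have hnKpk : ∀ j : ({T.parent k} : Set (Fin d)), ¬ Kp j.1 := by
    intro j h
    have hj : j.1 = T.parent k := Set.mem_singleton_iff.mp j.2
    rw [hj] at h
    exact hKPk h
  have hpkC : ∀ (z : (j : ({T.parent k} : Set (Fin d))) → Fin (n j.1))
      (x x' : ∀ i, Fin (n i)), (∀ i, ¬ Kp i → x i = x' i) →
      ((∀ j : ({T.parent k} : Set (Fin d)), x j.1 = z j) ↔
        (∀ j : ({T.parent k} : Set (Fin d)), x' j.1 = z j)) := by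
    intro z x x' hag
    constructor <;> intro h j
    · rw [← hag j.1 (hnKpk j)]; exact h j
    · rw [hag j.1 (hnKpk j)]; exact h j
  have htrueC : ∀ x x' : ∀ i, Fin (n i), (∀ i, Kp i → x i = x' i) →
      ((fun _ : ∀ i, Fin (n i) => True) x ↔ (fun _ : ∀ i, Fin (n i) => True) x') :=
    fun _ _ _ => Iff.rfl
  -- the matrices and the auxiliary scalar functions
  set M := margUnfold p S₁ S₂ with hM
  set N := margUnfold p S₁ ({T.parent k} : Set (Fin d)) with hN
  set G : ((j : S₂) → Fin (n j.1)) → ℝ := fun b =>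
    ∑ x : ∀ i, Fin (n i),
      if (fun _ : ∀ i, Fin (n i) => True) x ∧ (∀ j : S₂, x j.1 = b j) then p x else 0
    with hG
  set Hn : ((j : ({T.parent k} : Set (Fin d))) → Fin (n j.1)) → ℝ := fun z =>
    ∑ x : ∀ i, Fin (n i),
      if (fun _ : ∀ i, Fin (n i) => True) x ∧
        (∀ j : ({T.parent k} : Set (Fin d)), x j.1 = z j) then p x else 0
    with hHn
  -- positivity
  have hite : ∀ (P : Prop) (i1 i2 : Decidable P) (r : ℝ),
      @ite ℝ P i1 r 0 = @ite ℝ P i2 r 0 := by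
    intro P i1 i2 r
    rw [Subsingleton.elim i1 i2]
  have hGpos : ∀ b, 0 < G b := by
    intro b
    obtain ⟨w, hw1, hw2⟩ := hwb b
    rw [hG]
    refine Finset.sum_pos' (fun x _ => ?_) ⟨w, Finset.mem_univ w, ?_⟩
    · split_ifs
      · exact (hppos x).le
      · exact le_rfl
    · rw [if_pos ⟨trivial, hw1⟩]
      exact hppos w
  have hHnpos : ∀ b, 0 < Hn (σ b) := by
    intro b
    obtain ⟨w, hw1, hw2⟩ := hwb b
    rw [hHn]
    refine Finset.sum_pos' (fun x _ => ?_) ⟨w, Finset.mem_univ w, ?_⟩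
    · split_ifs
      · exact (hppos x).le
      · exact le_rfl
    · have hcond : ∀ j : ({T.parent k} : Set (Fin d)), w j.1 = σ b j := by
        intro j
        have hj : j.1 = T.parent k := Set.mem_singleton_iff.mp j.2
        exact hw1 ⟨j.1, hj.symm ▸ hPk⟩
      rw [if_pos ⟨trivial, hcond⟩]
      exact hppos w
  -- the key cross-multiplication identity
  have key : ∀ (a : (i : S₁) → Fin (n i.1)) (b : (j : S₂) → Fin (n j.1)),
      M a b * Hn (σ b) = N a (σ b) * G b := by
    intro a b
    obtain ⟨w, hw1, hw2⟩ := hwb b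
    have hwPk : ∀ x : ∀ i, Fin (n i), (∀ j : S₂, x j.1 = b j) →
        x (T.parent k) = w (T.parent k) := by
      intro x hx
      rw [hw2]
      exact hx ⟨T.parent k, hPk⟩
    have hwPk' : ∀ x : ∀ i, Fin (n i),
        (∀ j : ({T.parent k} : Set (Fin d)), x j.1 = σ b j) →
        x (T.parent k) = w (T.parent k) := by
      intro x hx
      rw [hw2]
      exact hx ⟨T.parent k, rfl⟩
    have e1 : M a b = _ :=
      (Finset.sum_congr rfl (fun x _ => hite _ _ _ _)).trans
        (master (fun x => ∀ i : S₁, x i.1 = a i)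
          (fun x => ∀ j : S₂, x j.1 = b j) (hrowC a) (hcolC b) w hwPk)
    have e2 : N a (σ b) = _ :=
      (Finset.sum_congr rfl (fun x _ => hite _ _ _ _)).trans
        (master (fun x => ∀ i : S₁, x i.1 = a i)
          (fun x => ∀ j : ({T.parent k} : Set (Fin d)), x j.1 = σ b j)
          (hrowC a) (hpkC (σ b)) w hwPk')
    have e3 : G b = _ :=
      (Finset.sum_congr rfl (fun x _ => hite _ _ _ _)).trans
        (master (fun _ => True)
          (fun x => ∀ j : S₂, x j.1 = b j) htrueC (hcolC b) w hwPk)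
    have e4 : Hn (σ b) = _ :=
      (Finset.sum_congr rfl (fun x _ => hite _ _ _ _)).trans
        (master (fun _ => True)
          (fun x => ∀ j : ({T.parent k} : Set (Fin d)), x j.1 = σ b j)
          htrueC (hpkC (σ b)) w hwPk')
    rw [e1, e2, e3, e4]
    ring
  -- conclude
  have hccol : ∀ b, M.transpose b = (G b / Hn (σ b)) • N.transpose (σ b) := by
    intro b
    funext a
    simp only [Matrix.transpose_apply, Pi.smul_apply, smul_eq_mul]
    rw [div_mul_eq_mul_div, mul_comm (G b) (N a (σ b)), ← key a b, mul_div_assoc,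
      div_self (hHnpos b).ne', mul_one]
  exact range_eq_of_cols_prop M N σ hσ _
    (fun b => div_ne_zero (hGpos b).ne' (hHnpos b).ne') hccol
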